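/- With the above setup, π D̄ D♯_{Q̄} = π D̃ D♯_{Q̃}, where π = (1/2)ϑ(I_p ⊗ 1₂ᵀ) is the common stationary distribution. -/

import Mathlib

open Matrix MeasureTheory

/-- `Q` is a generator matrix of a finite CTMC: nonnegative off-diagonal entries
and zero row sums. -/
def IsGenerator {n : Type*} [Fintype n] (Q : Matrix n n ℝ) : Prop :=
  (∀ i j, i ≠ j → 0 ≤ Q i j) ∧ ∀ i, ∑ j, Q i j = 0

/-- Irreducibility of the CTMC with generator `Q`: the transition matrix `e^Q`
is entrywise positive. -/
def IsIrreducibleGen {n : Type*} [Fintype n] [DecidableEq n] (Q : Matrix n n ℝ) : Prop :=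
  ∀ i j, 0 < NormedSpace.exp Q i j

/-- `π` is a stationary distribution of the generator `Q`: `πQ = 0`, `π1 = 1`. -/
def IsStationaryDist {n : Type*} [Fintype n] (Q : Matrix n n ℝ) (π : n → ℝ) : Prop :=
  (∀ i, 0 ≤ π i) ∧ (∑ i, π i = 1) ∧ π ᵥ* Q = 0

/-- The rank-one matrix `1π`. -/
def onePi {n : Type*} (π : n → ℝ) : Matrix n n ℝ :=
  Matrix.of fun _ j => π j

/-- `Ds` is the deviation matrix `D♯ = ∫₀^∞ (e^{Qu} − 1π) du` of `Q`
(entrywise convergent integral). -/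
def IsDeviation {n : Type*} [Fintype n] [DecidableEq n] (Q : Matrix n n ℝ) (π : n → ℝ)
    (Ds : Matrix n n ℝ) : Prop :=
  ∀ i j, IntegrableOn (fun u => NormedSpace.exp (u • Q) i j - π j) (Set.Ioi (0:ℝ)) MeasureTheory.volume ∧
    Ds i j = ∫ u in Set.Ioi (0:ℝ), (NormedSpace.exp (u • Q) i j - π j)

/-- `Dt` is the transient deviation matrix `D♯(t) = ∫₀^t (e^{Qu} − 1π) du` of `Q`. -/
def IsTransientDeviation {n : Type*} [Fintype n] [DecidableEq n] (Q : Matrix n n ℝ) (π : n → ℝ)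
    (Dt : ℝ → Matrix n n ℝ) : Prop :=
  ∀ t i j, Dt t i j = ∫ u in Set.Ioc (0:ℝ) t, (NormedSpace.exp (u • Q) i j - π j)

/-- The `p × 2p` matrix `I_p ⊗ 1₂ᵀ`, where the `2p` index set is `Fin p × Fin 2`. -/
def kronA (p : ℕ) : Matrix (Fin p) (Fin p × Fin 2) ℝ :=
  Matrix.of fun i jk => if jk.1 = i then 1 else 0

/-- The slowness condition `λ_i > S_i = ∑_{j≠i} q_{ij} = -G i i` for a generator `G`. -/
def IsSlow {p : ℕ} (G : Matrix (Fin p) (Fin p) ℝ) (lam : Fin p → ℝ) : Prop :=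
  ∀ i, -G i i < lam i

/-- The `2p × 2p` generator `Q̄` of the MTCP associated with a slow MMPP with
modulating generator `G` and rates `λ`: diagonal `2×2` blocks
`[[−λ_i, λ_i − S_i],[λ_i − S_i, −λ_i]]` (note `λ_i − S_i = λ_i + G i i`) and
off-diagonal blocks `q_{ij} I₂`. -/
def Qbar {p : ℕ} (G : Matrix (Fin p) (Fin p) ℝ) (lam : Fin p → ℝ) :
    Matrix (Fin p × Fin 2) (Fin p × Fin 2) ℝ :=
  Matrix.of fun ik jl =>
    if ik.1 = jl.1 then (if ik.2 = jl.2 then -lam ik.1 else lam ik.1 + G ik.1 ik.1)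
    else (if ik.2 = jl.2 then G ik.1 jl.1 else 0)

/-- The `2p × 2p` generator `Q̃` of the coupled MAP built from the MMPP: diagonal
blocks `[[−(λ_i + S_i), λ_i],[λ_i, −(λ_i + S_i)]]` (note `−(λ_i+S_i) = G i i − λ_i`)
and off-diagonal blocks `q_{ij} I₂`. -/
def Qtil {p : ℕ} (G : Matrix (Fin p) (Fin p) ℝ) (lam : Fin p → ℝ) :
    Matrix (Fin p × Fin 2) (Fin p × Fin 2) ℝ :=
  Matrix.of fun ik jl =>
    if ik.1 = jl.1 then (if ik.2 = jl.2 then G ik.1 ik.1 - lam ik.1 else lam ik.1)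
    else (if ik.2 = jl.2 then G ik.1 jl.1 else 0)

/-- The event-intensity matrix `D̄ = Q̄ − diag(Q̄)` of the associated MTCP. -/
def Dbar {p : ℕ} (G : Matrix (Fin p) (Fin p) ℝ) (lam : Fin p → ℝ) :
    Matrix (Fin p × Fin 2) (Fin p × Fin 2) ℝ :=
  Qbar G lam - Matrix.diagonal fun ik => Qbar G lam ik ik

/-- The event-intensity matrix `D̃` of the coupled MMPP: block diagonal with
blocks `[[0, λ_i],[λ_i, 0]]`. -/
def Dtil {p : ℕ} (lam : Fin p → ℝ) : Matrix (Fin p × Fin 2) (Fin p × Fin 2) ℝ :=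
  Matrix.of fun ik jl => if ik.1 = jl.1 ∧ ik.2 ≠ jl.2 then lam ik.1 else 0

/-- The common stationary distribution `π = (1/2) ϑ (I_p ⊗ 1₂ᵀ)` of `Q̄` and `Q̃`. -/
noncomputable def piHat {p : ℕ} (θ : Fin p → ℝ) : Fin p × Fin 2 → ℝ :=
  (1/2 : ℝ) • (θ ᵥ* kronA p)

section Aux
open scoped Nat

lemma intertwine_exp {m n : Type*} [Fintype m] [Fintype n] [DecidableEq m] [DecidableEq n]
    (A : Matrix m n ℝ) (G : Matrix m m ℝ) (Q : Matrix n n ℝ) (h : A * Q = G * A) :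
    A * NormedSpace.exp Q = NormedSpace.exp G * A := by
  letI : NormedRing (Matrix n n ℝ) := Matrix.linftyOpNormedRing
  letI : NormedAlgebra ℝ (Matrix n n ℝ) := Matrix.linftyOpNormedAlgebra
  letI : NormedRing (Matrix m m ℝ) := Matrix.linftyOpNormedRing
  letI : NormedAlgebra ℝ (Matrix m m ℝ) := Matrix.linftyOpNormedAlgebra
  have hpow : ∀ k : ℕ, A * Q ^ k = G ^ k * A := by
    intro k; induction k with
    | zero => simp
    | succ k ih =>
      rw [pow_succ, pow_succ, ← Matrix.mul_assoc, ih, Matrix.mul_assoc, h, ← Matrix.mul_assoc]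
  let L : Matrix n n ℝ →ₗ[ℝ] Matrix m n ℝ :=
    { toFun := fun X => A * X
      map_add' := fun X Y => Matrix.mul_add A X Y
      map_smul' := fun c X => Matrix.mul_smul A c X }
  let R : Matrix m m ℝ →ₗ[ℝ] Matrix m n ℝ :=
    { toFun := fun X => X * A
      map_add' := fun X Y => Matrix.add_mul X Y A
      map_smul' := fun c X => Matrix.smul_mul c X A }
  have hQ : Summable fun k : ℕ => (k !⁻¹ : ℝ) • Q ^ k := NormedSpace.expSeries_summable' Q
  have hGs : Summable fun k : ℕ => (k !⁻¹ : ℝ) • G ^ k := NormedSpace.expSeries_summable' G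
  have hL := (LinearMap.toContinuousLinearMap L).map_tsum hQ
  have hR := (LinearMap.toContinuousLinearMap R).map_tsum hGs
  have hexpQ : NormedSpace.exp Q = ∑' k : ℕ, (k !⁻¹ : ℝ) • Q ^ k := by
    rw [NormedSpace.exp_eq_tsum (𝕂 := ℝ)]
  have hexpG : NormedSpace.exp G = ∑' k : ℕ, (k !⁻¹ : ℝ) • G ^ k := by
    rw [NormedSpace.exp_eq_tsum (𝕂 := ℝ)]
  have hLe : A * NormedSpace.exp Q = L (∑' k : ℕ, (k !⁻¹ : ℝ) • Q ^ k) := by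
    rw [hexpQ]; rfl
  have hRe : NormedSpace.exp G * A = R (∑' k : ℕ, (k !⁻¹ : ℝ) • G ^ k) := by
    rw [hexpG]; rfl
  rw [hLe, hRe]
  rw [show L (∑' k : ℕ, (k !⁻¹ : ℝ) • Q ^ k)
      = (LinearMap.toContinuousLinearMap L) (∑' k : ℕ, (k !⁻¹ : ℝ) • Q ^ k) from rfl, hL]
  rw [show R (∑' k : ℕ, (k !⁻¹ : ℝ) • G ^ k)
      = (LinearMap.toContinuousLinearMap R) (∑' k : ℕ, (k !⁻¹ : ℝ) • G ^ k) from rfl, hR]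
  congr 1
  funext k
  rw [_root_.map_smul, _root_.map_smul]
  congr 1
  show A * Q ^ k = G ^ k * A
  exact hpow k

lemma kronA_mul_Qbar {p : ℕ} (G : Matrix (Fin p) (Fin p) ℝ) (lam : Fin p → ℝ) :
    kronA p * Qbar G lam = G * kronA p := by
  ext i jl
  obtain ⟨j, l⟩ := jl
  rw [Matrix.mul_apply, Fintype.sum_prod_type]
  have h1 : ∀ m : Fin p, (∑ k : Fin 2, kronA p i (m, k) * Qbar G lam (m, k) (j, l))
      = if m = i then ∑ k : Fin 2, Qbar G lam (m, k) (j, l) else 0 := by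
    intro m; by_cases hm : m = i <;> simp [kronA, hm]
  rw [Finset.sum_congr rfl fun m _ => h1 m, Finset.sum_ite_eq' Finset.univ i
    fun m => ∑ k : Fin 2, Qbar G lam (m, k) (j, l)]
  simp only [Finset.mem_univ, if_true]
  rw [Matrix.mul_apply]
  have h2 : ∀ m : Fin p, G i m * kronA p m (j, l) = if j = m then G i m else 0 := by
    intro m; by_cases hm : j = m <;> simp [kronA, hm]
  rw [Finset.sum_congr rfl fun m _ => h2 m, Finset.sum_ite_eq Finset.univ j fun m => G i m]
  simp only [Finset.mem_univ, if_true]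
  by_cases hij : i = j
  · subst hij; fin_cases l <;> simp [Qbar, Fin.sum_univ_two] <;> try ring
  · fin_cases l <;> simp [Qbar, Fin.sum_univ_two, hij] <;> try ring

lemma kronA_mul_Qtil {p : ℕ} (G : Matrix (Fin p) (Fin p) ℝ) (lam : Fin p → ℝ) :
    kronA p * Qtil G lam = G * kronA p := by
  ext i jl
  obtain ⟨j, l⟩ := jl
  rw [Matrix.mul_apply, Fintype.sum_prod_type]
  have h1 : ∀ m : Fin p, (∑ k : Fin 2, kronA p i (m, k) * Qtil G lam (m, k) (j, l))
      = if m = i then ∑ k : Fin 2, Qtil G lam (m, k) (j, l) else 0 := by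
    intro m; by_cases hm : m = i <;> simp [kronA, hm]
  rw [Finset.sum_congr rfl fun m _ => h1 m, Finset.sum_ite_eq' Finset.univ i
    fun m => ∑ k : Fin 2, Qtil G lam (m, k) (j, l)]
  simp only [Finset.mem_univ, if_true]
  rw [Matrix.mul_apply]
  have h2 : ∀ m : Fin p, G i m * kronA p m (j, l) = if j = m then G i m else 0 := by
    intro m; by_cases hm : j = m <;> simp [kronA, hm]
  rw [Finset.sum_congr rfl fun m _ => h2 m, Finset.sum_ite_eq Finset.univ j fun m => G i m]
  simp only [Finset.mem_univ, if_true]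
  by_cases hij : i = j
  · subst hij; fin_cases l <;> simp [Qtil, Fin.sum_univ_two] <;> try ring
  · fin_cases l <;> simp [Qtil, Fin.sum_univ_two, hij] <;> try ring

end Aux

theorem stmt13 {p : ℕ} (G : Matrix (Fin p) (Fin p) ℝ) (lam : Fin p → ℝ)
    (hG : IsGenerator G) (hirr : IsIrreducibleGen G) (hslow : IsSlow G lam)
    (θ : Fin p → ℝ) (hθ : IsStationaryDist G θ)
    (DsG : Matrix (Fin p) (Fin p) ℝ) (hDsG : IsDeviation G θ DsG)
    (DsQb DsQt : Matrix (Fin p × Fin 2) (Fin p × Fin 2) ℝ)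
    (hDsQb : IsDeviation (Qbar G lam) (piHat θ) DsQb)
    (hDsQt : IsDeviation (Qtil G lam) (piHat θ) DsQt) :
    (piHat θ ᵥ* Dbar G lam) ᵥ* DsQb = (piHat θ ᵥ* Dtil lam) ᵥ* DsQt := by
  have hπ : ∀ ik : Fin p × Fin 2, piHat θ ik = 1/2 * θ ik.1 := by
    intro ik
    simp [piHat, Matrix.vecMul, dotProduct, kronA, mul_ite, mul_one, mul_zero,
      Finset.sum_ite_eq, smul_eq_mul]
  have hAQb := kronA_mul_Qbar G lam
  have hAQt := kronA_mul_Qtil G lam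
  have hπQb : piHat θ ᵥ* Qbar G lam = 0 := by
    have h0 : piHat θ ᵥ* Qbar G lam = (1/2 : ℝ) • ((θ ᵥ* kronA p) ᵥ* Qbar G lam) := by
      unfold piHat; rw [Matrix.smul_vecMul]
    rw [h0, Matrix.vecMul_vecMul, hAQb, ← Matrix.vecMul_vecMul, hθ.2.2]
    simp
  have hvb : piHat θ ᵥ* Dbar G lam = fun jl => 1/2 * (θ jl.1 * lam jl.1) := by
    funext jl
    rw [Dbar, Matrix.vecMul_sub, hπQb]
    simp [Matrix.vecMul_diagonal, hπ jl, Qbar]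
    ring
  have hvt : piHat θ ᵥ* Dtil lam = fun jl => 1/2 * (θ jl.1 * lam jl.1) := by
    funext jl
    obtain ⟨j, l⟩ := jl
    have h3 : ∀ i : Fin p,
        (∑ k : Fin 2, piHat θ (i, k) * Dtil lam (i, k) (j, l))
          = if i = j then 1/2 * (θ j * lam j) else 0 := by
      intro i; by_cases hij : i = j
      · subst hij
        fin_cases l <;> simp [Dtil, hπ, Fin.sum_univ_two] <;> ring
      · simp [Dtil, hij]
    show ∑ ik : Fin p × Fin 2, piHat θ ik * Dtil lam ik (j, l) = _
    rw [Fintype.sum_prod_type, Finset.sum_congr rfl fun i _ => h3 i,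
      Finset.sum_ite_eq' Finset.univ j fun _ => 1/2 * (θ j * lam j)]
    simp
  have hkey : ∀ u : ℝ, kronA p * NormedSpace.exp (u • Qbar G lam)
      = kronA p * NormedSpace.exp (u • Qtil G lam) := by
    intro u
    rw [intertwine_exp (kronA p) (u • G) _ (by rw [Matrix.mul_smul, hAQb, Matrix.smul_mul]),
      intertwine_exp (kronA p) (u • G) _ (by rw [Matrix.mul_smul, hAQt, Matrix.smul_mul])]
  have collapse : ∀ (E : Matrix (Fin p × Fin 2) (Fin p × Fin 2) ℝ) (i : Fin p)
      (jl : Fin p × Fin 2), (kronA p * E) i jl = ∑ k : Fin 2, E (i, k) jl := by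
    intro E i jl
    rw [Matrix.mul_apply, Fintype.sum_prod_type]
    have h1 : ∀ m : Fin p, (∑ k : Fin 2, kronA p i (m, k) * E (m, k) jl)
        = if m = i then ∑ k : Fin 2, E (m, k) jl else 0 := by
      intro m; by_cases hm : m = i <;> simp [kronA, hm]
    rw [Finset.sum_congr rfl fun m _ => h1 m,
      Finset.sum_ite_eq' Finset.univ i fun m => ∑ k : Fin 2, E (m, k) jl]
    simp
  have hEsum : ∀ (u : ℝ) (i : Fin p) (jl : Fin p × Fin 2),
      (∑ k : Fin 2, NormedSpace.exp (u • Qbar G lam) (i, k) jl)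
        = ∑ k : Fin 2, NormedSpace.exp (u • Qtil G lam) (i, k) jl := by
    intro u i jl
    have h4 := congrFun (congrFun (hkey u) i) jl
    rwa [collapse, collapse] at h4
  funext jl
  show ((piHat θ ᵥ* Dbar G lam) ᵥ* DsQb) jl = ((piHat θ ᵥ* Dtil lam) ᵥ* DsQt) jl
  rw [hvb, hvt]
  show ∑ ik : Fin p × Fin 2, 1/2 * (θ ik.1 * lam ik.1) * DsQb ik jl
    = ∑ ik : Fin p × Fin 2, 1/2 * (θ ik.1 * lam ik.1) * DsQt ik jl
  have step : ∀ (Q : Matrix (Fin p × Fin 2) (Fin p × Fin 2) ℝ)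
      (Ds : Matrix (Fin p × Fin 2) (Fin p × Fin 2) ℝ),
      IsDeviation Q (piHat θ) Ds →
      ∑ ik : Fin p × Fin 2, 1/2 * (θ ik.1 * lam ik.1) * Ds ik jl
        = ∫ u in Set.Ioi (0:ℝ), ∑ ik : Fin p × Fin 2,
            1/2 * (θ ik.1 * lam ik.1) * (NormedSpace.exp (u • Q) ik jl - piHat θ jl) := by
    intro Q Ds hDs
    rw [MeasureTheory.integral_finset_sum _
      fun ik _ => ((hDs ik jl).1.const_mul (1/2 * (θ ik.1 * lam ik.1)))]
    refine Finset.sum_congr rfl fun ik _ => ?_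
    rw [(hDs ik jl).2, MeasureTheory.integral_const_mul]
  rw [step _ _ hDsQb, step _ _ hDsQt]
  congr 1
  funext u
  rw [Fintype.sum_prod_type, Fintype.sum_prod_type]
  refine Finset.sum_congr rfl fun i _ => ?_
  have h := hEsum u i jl
  rw [Fin.sum_univ_two, Fin.sum_univ_two] at h
  rw [Fin.sum_univ_two, Fin.sum_univ_two]
  linear_combination (1/2 * (θ i * lam i)) * h
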